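/- If a cubic (3-regular) graph G contains as a subgraph two diamonds connected by an edge (i.e., vertices u_1, u_2, u_3, u_4, v_1, v_2, v_3, v_4 with edges u_1u_2, u_1u_3, u_2u_3, u_2u_4, u_3u_4, v_1v_2, v_1v_3, v_2v_3, v_2v_4, v_3v_4, and u_1v_1), then χ'_irr(G) ≥ 3, i.e., G admits no locally irregular edge-coloring using at most 2 colors. -/
import Mathlib


/-- A graph is *locally irregular* if no two adjacent vertices have the same degree. -/
def LocallyIrregular {V : Type*} (G : SimpleGraph V) : Prop :=
  ∀ ⦃u v : V⦄, G.Adj u v → (G.neighborSet u).ncard ≠ (G.neighborSet v).ncard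

/-- `HasLIEC G k` : `G` admits a locally irregular edge-coloring using at most `k` colors,
i.e. an assignment of one of `k` colors to every edge such that the edges of each fixed
color induce a locally irregular graph. -/
def HasLIEC {V : Type*} (G : SimpleGraph V) (k : ℕ) : Prop :=
  ∃ c : Sym2 V → Fin k, ∀ i : Fin k,
    LocallyIrregular (SimpleGraph.fromEdgeSet {e | e ∈ G.edgeSet ∧ c e = i})

lemma nbhd_eq3 {V : Type*} [Fintype V] (G : SimpleGraph V) {x p q r : V}
    (hcard : (G.neighborSet x).ncard = 3)
    (hp : G.Adj x p) (hq : G.Adj x q) (hr : G.Adj x r)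
    (hpq : p ≠ q) (hpr : p ≠ r) (hqr : q ≠ r) :
    G.neighborSet x = {p, q, r} := by
  have hsub : ({p, q, r} : Set V) ⊆ G.neighborSet x := by
    intro y hy
    rcases hy with h | h | h <;> subst h <;> assumption
  have h3 : ({p, q, r} : Set V).ncard = 3 := by
    rw [Set.ncard_insert_of_notMem (by simp [hpq, hpr]),
      Set.ncard_insert_of_notMem (by simp [hqr]), Set.ncard_singleton]
  exact (Set.eq_of_subset_of_ncard_le hsub (by rw [hcard, h3]) (Set.toFinite _)).symm

def ind (a i : Fin 2) : ℕ := if a = i then 1 else 0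

lemma deg_formula {V : Type*} (G : SimpleGraph V) (c : Sym2 V → Fin 2) (i : Fin 2) {x p q r : V}
    (hN : G.neighborSet x = {p, q, r}) (hpq : p ≠ q) (hpr : p ≠ r) (hqr : q ≠ r) :
    ((SimpleGraph.fromEdgeSet {e | e ∈ G.edgeSet ∧ c e = i}).neighborSet x).ncard =
      ind (c s(x, p)) i + ind (c s(x, q)) i + ind (c s(x, r)) i := by
  classical
  have hset : (SimpleGraph.fromEdgeSet {e | e ∈ G.edgeSet ∧ c e = i}).neighborSet x
      = ↑(({p, q, r} : Finset V).filter (fun y => c s(x, y) = i)) := by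
    ext y
    simp only [SimpleGraph.mem_neighborSet, SimpleGraph.fromEdgeSet_adj, Set.mem_setOf_eq,
      SimpleGraph.mem_edgeSet, Finset.coe_filter, Finset.mem_insert, Finset.mem_singleton]
    constructor
    · rintro ⟨⟨hadj, hcol⟩, -⟩
      have : y ∈ G.neighborSet x := hadj
      rw [hN] at this
      simp only [Set.mem_insert_iff, Set.mem_singleton_iff] at this
      exact ⟨this, hcol⟩
    · rintro ⟨hy, hcol⟩
      have hmem : y ∈ G.neighborSet x := by
        rw [hN]; simp only [Set.mem_insert_iff, Set.mem_singleton_iff]; exact hy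
      exact ⟨⟨hmem, hcol⟩, (SimpleGraph.mem_neighborSet G x y |>.mp hmem).ne⟩
  rw [hset, Set.ncard_coe_finset, Finset.card_filter]
  rw [show ({p, q, r} : Finset V) = insert p (insert q {r}) from rfl,
    Finset.sum_insert (by simp [hpq, hpr]), Finset.sum_insert (by simp [hqr]),
    Finset.sum_singleton, add_assoc]
  rfl

set_option synthInstance.maxHeartbeats 1000000 in
set_option synthInstance.maxSize 5000 in
set_option maxHeartbeats 2000000 in
lemma key : ∀ A B C D F E A' B' C' D' F' H H' : Fin 2,
    (∀ i : Fin 2, A = i → ind A i + ind B i + ind E i ≠ ind A i + ind C i + ind D i) →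
    (∀ i : Fin 2, B = i → ind A i + ind B i + ind E i ≠ ind B i + ind C i + ind F i) →
    (∀ i : Fin 2, C = i → ind A i + ind C i + ind D i ≠ ind B i + ind C i + ind F i) →
    (∀ i : Fin 2, D = i → ind A i + ind C i + ind D i ≠ ind D i + ind F i + ind H i) →
    (∀ i : Fin 2, F = i → ind B i + ind C i + ind F i ≠ ind D i + ind F i + ind H i) →
    (∀ i : Fin 2, A' = i → ind A' i + ind B' i + ind E i ≠ ind A' i + ind C' i + ind D' i) →
    (∀ i : Fin 2, B' = i → ind A' i + ind B' i + ind E i ≠ ind B' i + ind C' i + ind F' i) →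
    (∀ i : Fin 2, C' = i → ind A' i + ind C' i + ind D' i ≠ ind B' i + ind C' i + ind F' i) →
    (∀ i : Fin 2, D' = i → ind A' i + ind C' i + ind D' i ≠ ind D' i + ind F' i + ind H' i) →
    (∀ i : Fin 2, F' = i → ind B' i + ind C' i + ind F' i ≠ ind D' i + ind F' i + ind H' i) →
    (∀ i : Fin 2, E = i → ind A i + ind B i + ind E i ≠ ind A' i + ind B' i + ind E i) →
    False := by decide

/-- If a cubic graph `G` contains two diamonds connected by an edge as a subgraph, then `G`
admits no locally irregular edge-coloring with at most 2 colors. -/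
theorem cubic_two_diamonds_no_2LIEC {V : Type*} [Fintype V] (G : SimpleGraph V)
    (hcubic : ∀ v : V, (G.neighborSet v).ncard = 3)
    (u1 u2 u3 u4 v1 v2 v3 v4 : V)
    (hdist : List.Pairwise (· ≠ ·) [u1, u2, u3, u4, v1, v2, v3, v4])
    (e1 : G.Adj u1 u2) (e2 : G.Adj u1 u3) (e3 : G.Adj u2 u3)
    (e4 : G.Adj u2 u4) (e5 : G.Adj u3 u4)
    (e6 : G.Adj v1 v2) (e7 : G.Adj v1 v3) (e8 : G.Adj v2 v3)
    (e9 : G.Adj v2 v4) (e10 : G.Adj v3 v4)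
    (e11 : G.Adj u1 v1) :
    ¬ HasLIEC G 2 := by

  rintro ⟨c, hc⟩
  simp only [List.pairwise_cons, List.mem_cons, List.mem_singleton, List.not_mem_nil,
    forall_eq_or_imp, forall_eq, List.Pairwise.nil, and_true, or_false] at hdist
  obtain ⟨⟨h12, h13, h14, h1v1, h1v2, h1v3, h1v4⟩, ⟨h23, h24, h2v1, h2v2, h2v3, h2v4⟩,
    ⟨h34, h3v1, h3v2, h3v3, h3v4⟩, ⟨h4v1, h4v2, h4v3, h4v4⟩,
    ⟨hv12, hv13, hv14⟩, ⟨hv23, hv24⟩, hv34, -⟩ := hdist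
  -- third neighbors of u4 and v4
  have hu4w : ∃ w, G.Adj u4 w ∧ w ≠ u2 ∧ w ≠ u3 := by
    have hns : ¬ (G.neighborSet u4 ⊆ ({u2, u3} : Set V)) := by
      intro h
      have := Set.ncard_le_ncard h (Set.toFinite _)
      rw [hcubic u4, Set.ncard_pair h23] at this
      omega
    obtain ⟨w, hwmem, hwn⟩ := Set.not_subset.mp hns
    simp only [Set.mem_insert_iff, Set.mem_singleton_iff, not_or] at hwn
    exact ⟨w, hwmem, hwn.1, hwn.2⟩
  have hv4w : ∃ w, G.Adj v4 w ∧ w ≠ v2 ∧ w ≠ v3 := by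
    have hns : ¬ (G.neighborSet v4 ⊆ ({v2, v3} : Set V)) := by
      intro h
      have := Set.ncard_le_ncard h (Set.toFinite _)
      rw [hcubic v4, Set.ncard_pair hv23] at this
      omega
    obtain ⟨w, hwmem, hwn⟩ := Set.not_subset.mp hns
    simp only [Set.mem_insert_iff, Set.mem_singleton_iff, not_or] at hwn
    exact ⟨w, hwmem, hwn.1, hwn.2⟩
  obtain ⟨w, hadjw, hw2, hw3⟩ := hu4w
  obtain ⟨w', hadjw', hw2', hw3'⟩ := hv4w
  -- neighborhoods
  have hNu1 : G.neighborSet u1 = {u2, u3, v1} := nbhd_eq3 G (hcubic u1) e1 e2 e11 h23 h2v1 h3v1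
  have hNu2 : G.neighborSet u2 = {u1, u3, u4} := nbhd_eq3 G (hcubic u2) e1.symm e3 e4 h13 h14 h34
  have hNu3 : G.neighborSet u3 = {u1, u2, u4} :=
    nbhd_eq3 G (hcubic u3) e2.symm e3.symm e5 h12 h14 h24
  have hNu4 : G.neighborSet u4 = {u2, u3, w} :=
    nbhd_eq3 G (hcubic u4) e4.symm e5.symm hadjw h23 hw2.symm hw3.symm
  have hNv1 : G.neighborSet v1 = {v2, v3, u1} :=
    nbhd_eq3 G (hcubic v1) e6 e7 e11.symm hv23 h1v2.symm h1v3.symm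
  have hNv2 : G.neighborSet v2 = {v1, v3, v4} :=
    nbhd_eq3 G (hcubic v2) e6.symm e8 e9 hv13 hv14 hv34
  have hNv3 : G.neighborSet v3 = {v1, v2, v4} :=
    nbhd_eq3 G (hcubic v3) e7.symm e8.symm e10 hv12 hv14 hv24
  have hNv4 : G.neighborSet v4 = {v2, v3, w'} :=
    nbhd_eq3 G (hcubic v4) e9.symm e10.symm hadjw' hv23 hw2'.symm hw3'.symm
  -- degree formulas
  have dU1 : ∀ i, ((SimpleGraph.fromEdgeSet {e | e ∈ G.edgeSet ∧ c e = i}).neighborSet u1).ncard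
      = ind (c s(u1, u2)) i + ind (c s(u1, u3)) i + ind (c s(u1, v1)) i :=
    fun i => deg_formula G c i hNu1 h23 h2v1 h3v1
  have dU2 : ∀ i, ((SimpleGraph.fromEdgeSet {e | e ∈ G.edgeSet ∧ c e = i}).neighborSet u2).ncard
      = ind (c s(u1, u2)) i + ind (c s(u2, u3)) i + ind (c s(u2, u4)) i := fun i => by
    have := deg_formula G c i hNu2 h13 h14 h34
    rwa [show s(u2, u1) = s(u1, u2) from Sym2.eq_swap] at this
  have dU3 : ∀ i, ((SimpleGraph.fromEdgeSet {e | e ∈ G.edgeSet ∧ c e = i}).neighborSet u3).ncard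
      = ind (c s(u1, u3)) i + ind (c s(u2, u3)) i + ind (c s(u3, u4)) i := fun i => by
    have := deg_formula G c i hNu3 h12 h14 h24
    rwa [show s(u3, u1) = s(u1, u3) from Sym2.eq_swap,
      show s(u3, u2) = s(u2, u3) from Sym2.eq_swap] at this
  have dU4 : ∀ i, ((SimpleGraph.fromEdgeSet {e | e ∈ G.edgeSet ∧ c e = i}).neighborSet u4).ncard
      = ind (c s(u2, u4)) i + ind (c s(u3, u4)) i + ind (c s(u4, w)) i := fun i => by
    have := deg_formula G c i hNu4 h23 hw2.symm hw3.symm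
    rwa [show s(u4, u2) = s(u2, u4) from Sym2.eq_swap,
      show s(u4, u3) = s(u3, u4) from Sym2.eq_swap] at this
  have dV1 : ∀ i, ((SimpleGraph.fromEdgeSet {e | e ∈ G.edgeSet ∧ c e = i}).neighborSet v1).ncard
      = ind (c s(v1, v2)) i + ind (c s(v1, v3)) i + ind (c s(u1, v1)) i := fun i => by
    have := deg_formula G c i hNv1 hv23 h1v2.symm h1v3.symm
    rwa [show s(v1, u1) = s(u1, v1) from Sym2.eq_swap] at this
  have dV2 : ∀ i, ((SimpleGraph.fromEdgeSet {e | e ∈ G.edgeSet ∧ c e = i}).neighborSet v2).ncard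
      = ind (c s(v1, v2)) i + ind (c s(v2, v3)) i + ind (c s(v2, v4)) i := fun i => by
    have := deg_formula G c i hNv2 hv13 hv14 hv34
    rwa [show s(v2, v1) = s(v1, v2) from Sym2.eq_swap] at this
  have dV3 : ∀ i, ((SimpleGraph.fromEdgeSet {e | e ∈ G.edgeSet ∧ c e = i}).neighborSet v3).ncard
      = ind (c s(v1, v3)) i + ind (c s(v2, v3)) i + ind (c s(v3, v4)) i := fun i => by
    have := deg_formula G c i hNv3 hv12 hv14 hv24
    rwa [show s(v3, v1) = s(v1, v3) from Sym2.eq_swap,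
      show s(v3, v2) = s(v2, v3) from Sym2.eq_swap] at this
  have dV4 : ∀ i, ((SimpleGraph.fromEdgeSet {e | e ∈ G.edgeSet ∧ c e = i}).neighborSet v4).ncard
      = ind (c s(v2, v4)) i + ind (c s(v3, v4)) i + ind (c s(v4, w')) i := fun i => by
    have := deg_formula G c i hNv4 hv23 hw2'.symm hw3'.symm
    rwa [show s(v4, v2) = s(v2, v4) from Sym2.eq_swap,
      show s(v4, v3) = s(v3, v4) from Sym2.eq_swap] at this
  -- edge constraints
  have mkAdj : ∀ {x y : V}, G.Adj x y → ∀ i : Fin 2, c s(x, y) = i →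
      (SimpleGraph.fromEdgeSet {e | e ∈ G.edgeSet ∧ c e = i}).Adj x y := by
    intro x y hxy i hi
    exact (SimpleGraph.fromEdgeSet_adj _).mpr ⟨⟨(G.mem_edgeSet).mpr hxy, hi⟩, hxy.ne⟩
  refine key (c s(u1, u2)) (c s(u1, u3)) (c s(u2, u3)) (c s(u2, u4)) (c s(u3, u4)) (c s(u1, v1))
    (c s(v1, v2)) (c s(v1, v3)) (c s(v2, v3)) (c s(v2, v4)) (c s(v3, v4)) (c s(u4, w))
    (c s(v4, w')) ?_ ?_ ?_ ?_ ?_ ?_ ?_ ?_ ?_ ?_ ?_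
  · intro i hi; have := hc i (mkAdj e1 i hi); rwa [dU1 i, dU2 i] at this
  · intro i hi; have := hc i (mkAdj e2 i hi); rwa [dU1 i, dU3 i] at this
  · intro i hi; have := hc i (mkAdj e3 i hi); rwa [dU2 i, dU3 i] at this
  · intro i hi; have := hc i (mkAdj e4 i hi); rwa [dU2 i, dU4 i] at this
  · intro i hi; have := hc i (mkAdj e5 i hi); rwa [dU3 i, dU4 i] at this
  · intro i hi; have := hc i (mkAdj e6 i hi); rwa [dV1 i, dV2 i] at this
  · intro i hi; have := hc i (mkAdj e7 i hi); rwa [dV1 i, dV3 i] at this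
  · intro i hi; have := hc i (mkAdj e8 i hi); rwa [dV2 i, dV3 i] at this
  · intro i hi; have := hc i (mkAdj e9 i hi); rwa [dV2 i, dV4 i] at this
  · intro i hi; have := hc i (mkAdj e10 i hi); rwa [dV3 i, dV4 i] at this
  · intro i hi; have := hc i (mkAdj e11 i hi); rwa [dU1 i, dV1 i] at this
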